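/- arXiv:2108.07967 — 2 statements merged into one kernel-verified Lean document; each statement's English description precedes it below -/
import Mathlib

section
/- For every point x in an open set Ω ⊊ ℝⁿ, the integral ∫_{ℝⁿ∖Ω} |x-y|^{-(n+2σ)} dy is bounded above by C(n,σ)/m_{2σ}(x)^{2σ}, where the bound comes from integrating along rays: ∫_{ℝⁿ∖Ω} |x-y|^{-(n+2σ)} dy ≤ ∫_{S^{n-1}} (2σ d_{ω,Ω}(x)^{2σ})^{-1} dω. -/
open MeasureTheory

open Set Metric

/-- The ray distance `d_{ω,Ω}(x) = inf{ |t| : x + tω ∉ Ω }`. -/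
noncomputable def rayDist (n : ℕ) (Ω : Set (EuclideanSpace ℝ (Fin n)))
    (x : EuclideanSpace ℝ (Fin n)) (ω : EuclideanSpace ℝ (Fin n)) : ℝ :=
  sInf {r : ℝ | ∃ t : ℝ, x + t • ω ∉ Ω ∧ r = |t|}

/-- for `x` in an open set `Ω ⊊ ℝⁿ`,
`∫_{ℝⁿ∖Ω} |x-y|^{-(n+2σ)} dy ≤ ∫_{S^{n-1}} (2σ d_{ω,Ω}(x)^{2σ})^{-1} dω`. -/
theorem stmt_1 (n : ℕ) (hn : 1 ≤ n) (σ : ℝ) (hσ : σ ∈ Set.Ioo (0 : ℝ) 1)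
    (Ω : Set (EuclideanSpace ℝ (Fin n))) (hΩ : IsOpen Ω) (hne : Ω ≠ Set.univ)
    (x : EuclideanSpace ℝ (Fin n)) (hx : x ∈ Ω) :
    (∫⁻ y in Ωᶜ, ENNReal.ofReal (1 / ‖x - y‖ ^ ((n : ℝ) + 2 * σ))) ≤
      ∫⁻ ω : Metric.sphere (0 : EuclideanSpace ℝ (Fin n)) 1,
        ENNReal.ofReal (1 / (2 * σ * rayDist n Ω x (ω : EuclideanSpace ℝ (Fin n)) ^ (2 * σ)))
        ∂((volume : Measure (EuclideanSpace ℝ (Fin n))).toSphere) := by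
  obtain ⟨hσ0, hσ1⟩ := hσ
  haveI : Nonempty (Fin n) := ⟨⟨0, hn⟩⟩
  haveI : Nontrivial (EuclideanSpace ℝ (Fin n)) := by infer_instance
  set ff : EuclideanSpace ℝ (Fin n) → ENNReal :=
    fun z => ENNReal.ofReal (1 / ‖z‖ ^ ((n : ℝ) + 2 * σ)) with hff
  have ffmeas : Measurable ff := by
    apply ENNReal.measurable_ofReal.comp
    exact measurable_const.div (measurable_norm.pow_const _)
  set T : Set (EuclideanSpace ℝ (Fin n)) := (fun z => x - z) ⁻¹' Ωᶜ with hT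
  have hTmeas : MeasurableSet T :=
    (measurable_const.sub measurable_id) hΩ.isClosed_compl.measurableSet
  set G : EuclideanSpace ℝ (Fin n) → ENNReal := T.indicator ff with hG
  have Gmeas : Measurable G := ffmeas.indicator hTmeas
  have hmp : MeasurePreserving (fun y : EuclideanSpace ℝ (Fin n) => x - y) volume volume :=
    Measure.measurePreserving_sub_left volume x
  have hemb : MeasurableEmbedding (fun y : EuclideanSpace ℝ (Fin n) => x - y) :=
    (MeasurableEquiv.subLeft x).measurableEmbedding
  have hpre : (fun y : EuclideanSpace ℝ (Fin n) => x - y) ⁻¹' T = Ωᶜ := by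
    ext y; simp [hT, sub_sub_cancel]
  have step1 : (∫⁻ y in Ωᶜ, ENNReal.ofReal (1 / ‖x - y‖ ^ ((n : ℝ) + 2 * σ))) =
      ∫⁻ z, G z := by
    rw [hG, lintegral_indicator hTmeas, ← hpre]
    exact hmp.setLIntegral_comp_preimage_emb hemb ff T
  rw [step1]
  have hdim : Module.finrank ℝ (EuclideanSpace ℝ (Fin n)) = n := finrank_euclideanSpace_fin
  have step2 : (∫⁻ z, G z) =
      ∫⁻ p : sphere (0 : EuclideanSpace ℝ (Fin n)) 1 × Ioi (0 : ℝ),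
        G ((p.2 : ℝ) • (p.1 : EuclideanSpace ℝ (Fin n)))
        ∂((volume : Measure (EuclideanSpace ℝ (Fin n))).toSphere.prod
          (Measure.volumeIoiPow (Module.finrank ℝ (EuclideanSpace ℝ (Fin n)) - 1))) := by
    calc ∫⁻ z, G z
        = ∫⁻ z in ({0} : Set (EuclideanSpace ℝ (Fin n)))ᶜ, G z := by
          rw [restrict_compl_singleton]
      _ = ∫⁻ z : (({0} : Set (EuclideanSpace ℝ (Fin n)))ᶜ : Set _), G z
            ∂(Measure.comap Subtype.val volume) :=
          (lintegral_subtype_comap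
            (measurableSet_singleton (0 : EuclideanSpace ℝ (Fin n))).compl _).symm
      _ = ∫⁻ z : (({0} : Set (EuclideanSpace ℝ (Fin n)))ᶜ : Set _),
            (fun p : sphere (0 : EuclideanSpace ℝ (Fin n)) 1 × Ioi (0 : ℝ) =>
              G ((p.2 : ℝ) • (p.1 : EuclideanSpace ℝ (Fin n))))
              (homeomorphUnitSphereProd (EuclideanSpace ℝ (Fin n)) z)
            ∂(Measure.comap Subtype.val volume) := by
          refine lintegral_congr fun z => ?_
          simp only [homeomorphUnitSphereProd_apply_fst_coe,
            homeomorphUnitSphereProd_apply_snd_coe]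
          rw [smul_inv_smul₀ (norm_ne_zero_iff.2 z.2)]
      _ = _ := (Measure.measurePreserving_homeomorphUnitSphereProd
            (volume : Measure (EuclideanSpace ℝ (Fin n)))).lintegral_comp_emb
          (homeomorphUnitSphereProd (EuclideanSpace ℝ (Fin n))).measurableEmbedding
          (fun p : sphere (0 : EuclideanSpace ℝ (Fin n)) 1 × Ioi (0 : ℝ) =>
            G ((p.2 : ℝ) • (p.1 : EuclideanSpace ℝ (Fin n))))
  rw [step2]
  have step3 : (∫⁻ p : sphere (0 : EuclideanSpace ℝ (Fin n)) 1 × Ioi (0 : ℝ),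
        G ((p.2 : ℝ) • (p.1 : EuclideanSpace ℝ (Fin n)))
        ∂((volume : Measure (EuclideanSpace ℝ (Fin n))).toSphere.prod
          (Measure.volumeIoiPow (Module.finrank ℝ (EuclideanSpace ℝ (Fin n)) - 1)))) =
      ∫⁻ ω : sphere (0 : EuclideanSpace ℝ (Fin n)) 1, ∫⁻ r : Ioi (0 : ℝ),
        G ((r : ℝ) • (ω : EuclideanSpace ℝ (Fin n)))
        ∂(Measure.volumeIoiPow (Module.finrank ℝ (EuclideanSpace ℝ (Fin n)) - 1))
        ∂((volume : Measure (EuclideanSpace ℝ (Fin n))).toSphere) := by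
    apply lintegral_prod
    exact (Gmeas.comp ((continuous_subtype_val.comp continuous_snd).smul
      (continuous_subtype_val.comp continuous_fst)).measurable).aemeasurable
  rw [step3]
  simp only [hdim]
  refine lintegral_mono fun ω => ?_
  set d : ℝ := rayDist n Ω x (ω : EuclideanSpace ℝ (Fin n)) with hd
  have hdS : d = sInf {r : ℝ | ∃ t : ℝ, x + t • (ω : EuclideanSpace ℝ (Fin n)) ∉ Ω ∧ r = |t|} := rfl
  have hωnorm : ‖(ω : EuclideanSpace ℝ (Fin n))‖ = 1 := mem_sphere_zero_iff_norm.1 ω.2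
  have hnorm : ∀ r : ℝ, 0 < r → ‖r • (ω : EuclideanSpace ℝ (Fin n))‖ = r := by
    intro r hr
    rw [norm_smul, hωnorm, mul_one, Real.norm_eq_abs, abs_of_pos hr]
  have hVD : Measure.volumeIoiPow (n - 1) =
      (Measure.comap Subtype.val volume).withDensity
        (fun r : Ioi (0:ℝ) => ENNReal.ofReal ((r : ℝ) ^ (n - 1))) := rfl
  have inner_eq : (∫⁻ r : Ioi (0:ℝ), G ((r : ℝ) • (ω : EuclideanSpace ℝ (Fin n)))
      ∂(Measure.volumeIoiPow (n - 1))) =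
      ∫⁻ r in Ioi (0:ℝ), ENNReal.ofReal (r ^ (n - 1)) *
        G (r • (ω : EuclideanSpace ℝ (Fin n))) := by
    have hmul := lintegral_withDensity_eq_lintegral_mul (Measure.comap Subtype.val volume)
      (f := fun r : Ioi (0:ℝ) => ENNReal.ofReal ((r : ℝ) ^ (n - 1)))
      ((measurable_subtype_coe.pow_const _).ennreal_ofReal)
      (g := fun r : Ioi (0:ℝ) => G ((r : ℝ) • (ω : EuclideanSpace ℝ (Fin n))))
      (Gmeas.comp (continuous_subtype_val.smul continuous_const).measurable)
    rw [hVD]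
    exact hmul.trans (lintegral_subtype_comap measurableSet_Ioi
      (fun r : ℝ => ENNReal.ofReal (r ^ (n - 1)) * G (r • (ω : EuclideanSpace ℝ (Fin n)))))
  rw [inner_eq]
  by_cases hSne : {r : ℝ | ∃ t : ℝ, x + t • (ω : EuclideanSpace ℝ (Fin n)) ∉ Ω ∧ r = |t|}.Nonempty
  · -- nonempty case
    have bddS : BddBelow {r : ℝ | ∃ t : ℝ, x + t • (ω : EuclideanSpace ℝ (Fin n)) ∉ Ω ∧ r = |t|} :=
      ⟨0, fun r hr => by obtain ⟨t, -, rfl⟩ := hr; exact abs_nonneg t⟩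
    obtain ⟨ε, εpos, hball⟩ := Metric.isOpen_iff.1 hΩ x hx
    have d_pos : 0 < d := by
      rw [hdS]
      refine lt_of_lt_of_le εpos (le_csInf hSne ?_)
      rintro r ⟨t, htΩ, rfl⟩
      by_contra hlt
      push_neg at hlt
      refine htΩ (hball ?_)
      rw [mem_ball, dist_eq_norm, add_sub_cancel_left, norm_smul, hωnorm, mul_one,
        Real.norm_eq_abs]
      exact hlt
    have hbound : ∀ r ∈ Ioi (0:ℝ),
        ENNReal.ofReal (r ^ (n - 1)) * G (r • (ω : EuclideanSpace ℝ (Fin n))) ≤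
        (Ici d).indicator (fun s => ENNReal.ofReal (s ^ (-(1 + 2 * σ)))) r := by
      intro r hr
      rw [mem_Ioi] at hr
      by_cases hrT : r • (ω : EuclideanSpace ℝ (Fin n)) ∈ T
      · have hmem' : x + (-r) • (ω : EuclideanSpace ℝ (Fin n)) ∉ Ω := by
          have := hrT
          rw [hT, mem_preimage, mem_compl_iff] at this
          simpa [neg_smul, ← sub_eq_add_neg] using this
        have hd_le : d ≤ r := by
          rw [hdS]
          exact csInf_le bddS ⟨-r, hmem', by rw [abs_neg, abs_of_pos hr]⟩
        rw [indicator_of_mem (mem_Ici.2 hd_le), hG, indicator_of_mem hrT]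
        simp only [hff]
        have h1 : r ^ (n - 1) = r ^ (((n : ℝ) - 1)) := by
          rw [← Real.rpow_natCast r (n - 1), Nat.cast_sub hn, Nat.cast_one]
        have h2 : 1 / ‖r • (ω : EuclideanSpace ℝ (Fin n))‖ ^ ((n : ℝ) + 2 * σ) =
            r ^ (-((n : ℝ) + 2 * σ)) := by
          rw [hnorm r hr, Real.rpow_neg hr.le, one_div]
        rw [h1, h2, ← ENNReal.ofReal_mul (Real.rpow_nonneg hr.le _), ← Real.rpow_add hr]
        have h3 : (n : ℝ) - 1 + -((n : ℝ) + 2 * σ) = -(1 + 2 * σ) := by ring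
        rw [h3]
      · rw [hG, indicator_of_notMem hrT, mul_zero]
        exact zero_le
    calc ∫⁻ r in Ioi (0:ℝ), ENNReal.ofReal (r ^ (n - 1)) *
          G (r • (ω : EuclideanSpace ℝ (Fin n)))
        ≤ ∫⁻ r in Ioi (0:ℝ),
            (Ici d).indicator (fun s => ENNReal.ofReal (s ^ (-(1 + 2 * σ)))) r :=
          setLIntegral_mono
            (((measurable_id.pow measurable_const).ennreal_ofReal).indicator measurableSet_Ici) hbound
      _ = ∫⁻ r in Ici d ∩ Ioi (0:ℝ), ENNReal.ofReal (r ^ (-(1 + 2 * σ))) := by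
          rw [lintegral_indicator measurableSet_Ici, Measure.restrict_restrict measurableSet_Ici]
      _ = ∫⁻ r in Ioi d, ENNReal.ofReal (r ^ (-(1 + 2 * σ))) := by
          have hinter : Ici d ∩ Ioi (0:ℝ) = Ici d :=
            inter_eq_left.2 fun r hr => lt_of_lt_of_le d_pos hr
          rw [hinter, ← Measure.restrict_congr_set Ioi_ae_eq_Ici]
      _ = ENNReal.ofReal (∫ r in Ioi d, r ^ (-(1 + 2 * σ))) :=
          (ofReal_integral_eq_lintegral_ofReal
            (integrableOn_Ioi_rpow_of_lt (by linarith) d_pos)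
            (by
              filter_upwards [ae_restrict_mem measurableSet_Ioi] with r hr
              exact Real.rpow_nonneg (le_of_lt (d_pos.trans hr)) _)).symm
      _ = ENNReal.ofReal (1 / (2 * σ * d ^ (2 * σ))) := by
          rw [integral_Ioi_rpow_of_lt (by linarith) d_pos]
          congr 1
          have h3 : -(1 + 2 * σ) + 1 = -(2 * σ) := by ring
          rw [h3, Real.rpow_neg d_pos.le]
          have h4 : (0:ℝ) < d ^ (2 * σ) := Real.rpow_pos_of_pos d_pos _
          field_simp
  · -- empty case: the ray never leaves Ω, integrand vanishes
    have hzero : ∀ r ∈ Ioi (0:ℝ),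
        ENNReal.ofReal (r ^ (n - 1)) * G (r • (ω : EuclideanSpace ℝ (Fin n))) = 0 := by
      intro r hr
      rw [mem_Ioi] at hr
      have hnotT : r • (ω : EuclideanSpace ℝ (Fin n)) ∉ T := by
        intro hmem
        rw [hT, mem_preimage, mem_compl_iff] at hmem
        exact hSne ⟨r, -r, by simpa [neg_smul, ← sub_eq_add_neg] using hmem,
          by rw [abs_neg, abs_of_pos hr]⟩
      rw [hG, indicator_of_notMem hnotT, mul_zero]
    rw [setLIntegral_congr_fun measurableSet_Ioi hzero]
    simp
end

section
/- Let u ≥ 0 with ∫ u² = 1 be written as u = Σᵢ uᵢ where the uᵢ are nonzero, nonnegative, and have pairwise a.e.-disjoint positivity sets. Then the Gagliardo energies over positivity sets satisfy Σᵢ ∬_{{uᵢ>0}×{uᵢ>0}} (uᵢ(x)-uᵢ(y))²/|x-y|^{n+2σ} dx dy ≤ ∬_{{u>0}×{u>0}} (u(x)-u(y))²/|x-y|^{n+2σ} dx dy, and Σᵢ ∫ uᵢ² = 1, Σᵢ |{uᵢ > 0}| = |{u > 0}|. -/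
open MeasureTheory ENNReal

/-- The Gagliardo energy of `u` over `A × A`. -/
noncomputable def gagliardo (n : ℕ) (σ : ℝ) (A : Set (EuclideanSpace ℝ (Fin n)))
    (u : EuclideanSpace ℝ (Fin n) → ℝ) : ℝ≥0∞ :=
  ∫⁻ x in A, ∫⁻ y in A, ENNReal.ofReal ((u x - u y) ^ 2 / ‖x - y‖ ^ ((n : ℝ) + 2 * σ))

/-- if `u = Σᵢ uᵢ` with the `uᵢ` nonzero, nonnegative and with pairwise
a.e.-disjoint positivity sets and `∫ u² = 1`, then the energies over positivity sets add up to
at most the energy of `u`, the `L²` masses add to `1`, and the positivity measures add up. -/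
theorem stmt_15 (n : ℕ) (hn : 1 ≤ n) (σ : ℝ) (hσ : σ ∈ Set.Ioo (0 : ℝ) 1)
    (m : ℕ) (u : Fin m → EuclideanSpace ℝ (Fin n) → ℝ)
    (hmeas : ∀ i, Measurable (u i)) (hnn : ∀ i x, 0 ≤ u i x)
    (hnz : ∀ i, volume {x | u i x ≠ 0} ≠ 0)
    (hdisj : ∀ i j, i ≠ j → volume ({x | 0 < u i x} ∩ {x | 0 < u j x}) = 0)
    (hnorm : (∫⁻ x, ENNReal.ofReal ((∑ i, u i x) ^ 2)) = 1) :
    (∑ i, gagliardo n σ {x | 0 < u i x} (u i)) ≤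
        gagliardo n σ {x | 0 < ∑ i, u i x} (fun x => ∑ i, u i x) ∧
      (∑ i, ∫⁻ x, ENNReal.ofReal (u i x ^ 2)) = 1 ∧
      (∑ i, volume {x | 0 < u i x}) = volume {x | 0 < ∑ i, u i x} := by
  set A : Fin m → Set (EuclideanSpace ℝ (Fin n)) := fun i => {x | 0 < u i x} with hA
  have hAmeas : ∀ i, MeasurableSet (A i) := fun i =>
    measurableSet_lt measurable_const (hmeas i)
  set N : Set (EuclideanSpace ℝ (Fin n)) :=
    ⋃ i, ⋃ j, ⋃ (_ : i ≠ j), (A i ∩ A j) with hNdef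
  have hNmeas : MeasurableSet N :=
    MeasurableSet.iUnion fun i => MeasurableSet.iUnion fun j =>
      MeasurableSet.iUnion fun _ => (hAmeas i).inter (hAmeas j)
  have hN : volume N = 0 :=
    measure_iUnion_null fun i => measure_iUnion_null fun j =>
      measure_iUnion_null fun h => hdisj i j h
  have hsubN : ∀ i j, i ≠ j → A i ∩ A j ⊆ N := by
    intro i j h x hx
    exact Set.mem_iUnion.mpr ⟨i, Set.mem_iUnion.mpr ⟨j, Set.mem_iUnion.mpr ⟨h, hx⟩⟩⟩
  set B : Fin m → Set (EuclideanSpace ℝ (Fin n)) := fun i => A i \ N with hB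
  have hBmeas : ∀ i, MeasurableSet (B i) := fun i => (hAmeas i).diff hNmeas
  have hBsub : ∀ i, B i ⊆ A i := fun i => Set.diff_subset
  have hBdisj : Pairwise (Function.onFun Disjoint B) := by
    intro i j h
    refine Set.disjoint_left.mpr fun x hxi hxj => hxi.2 ?_
    exact hsubN i j h ⟨hxi.1, hxj.1⟩
  have hAB : ∀ i, volume.restrict (A i) = volume.restrict (B i) := by
    intro i
    refine Measure.restrict_congr_set ?_
    rw [MeasureTheory.ae_eq_set]
    constructor
    · refine measure_mono_null (fun x hx => ?_) hN
      by_contra hxN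
      exact hx.2 ⟨hx.1, hxN⟩
    · have : B i \ A i = ∅ := by
        ext x; simp only [Set.mem_diff, Set.mem_empty_iff_false, iff_false]
        rintro ⟨⟨hx, _⟩, hxA⟩; exact hxA hx
      rw [this]; exact measure_empty
  have hu : ∀ i, ∀ x ∈ B i, (∑ j, u j x) = u i x := by
    intro i x hx
    refine Finset.sum_eq_single i (fun j _ hj => ?_) (fun h => absurd (Finset.mem_univ i) h)
    by_contra hne
    have hpos : 0 < u j x := lt_of_le_of_ne (hnn j x) (Ne.symm hne)
    exact hx.2 (hsubN j i hj ⟨hpos, hx.1⟩)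
  have hS : {x | 0 < ∑ i, u i x} = ⋃ i, A i := by
    ext x
    simp only [Set.mem_setOf_eq, Set.mem_iUnion]
    constructor
    · intro hx
      by_contra h
      push_neg at h
      have hz : ∑ i, u i x = 0 :=
        Finset.sum_eq_zero fun i _ => le_antisymm (not_lt.mp (h i)) (hnn i x)
      rw [hz] at hx; exact lt_irrefl _ hx
    · rintro ⟨i, hi⟩
      exact lt_of_lt_of_le hi (Finset.single_le_sum (fun j _ => hnn j x) (Finset.mem_univ i))
  have hAS : ∀ i, A i ⊆ {x | 0 < ∑ i, u i x} := by
    intro i x hx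
    rw [hS]; exact Set.mem_iUnion.mpr ⟨i, hx⟩
  have hBS : ∀ i, B i ⊆ {x | 0 < ∑ i, u i x} := fun i => (hBsub i).trans (hAS i)
  -- Part 3
  have part3 : (∑ i, volume (A i)) = volume {x | 0 < ∑ i, u i x} := by
    rw [hS, measure_iUnion₀ (fun i j h => hdisj i j h)
      (fun i => (hAmeas i).nullMeasurableSet), tsum_fintype]
  -- Part 2
  have hae : ∀ᵐ x, x ∉ N := by
    rw [MeasureTheory.ae_iff]
    simpa using hN
  have hsq : ∀ x, x ∉ N → (∑ i, u i x) ^ 2 = ∑ i, u i x ^ 2 := by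
    intro x hx
    rw [sq, Finset.sum_mul_sum]
    refine Finset.sum_congr rfl fun i _ => ?_
    rw [sq]
    refine Finset.sum_eq_single i (fun j _ hj => ?_) (fun h => absurd (Finset.mem_univ i) h)
    rcases eq_or_lt_of_le (hnn i x) with h0 | hipos
    · rw [← h0, zero_mul]
    rcases eq_or_lt_of_le (hnn j x) with h0 | hjpos
    · rw [← h0, mul_zero]
    exact absurd (hsubN i j (Ne.symm hj) ⟨hipos, hjpos⟩) hx
  have part2 : (∑ i, ∫⁻ x, ENNReal.ofReal (u i x ^ 2)) = 1 := by
    calc (∑ i, ∫⁻ x, ENNReal.ofReal (u i x ^ 2))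
        = ∫⁻ x, ∑ i, ENNReal.ofReal (u i x ^ 2) :=
          (lintegral_finset_sum _ fun i _ => ((hmeas i).pow_const 2).ennreal_ofReal).symm
      _ = ∫⁻ x, ENNReal.ofReal (∑ i, u i x ^ 2) := by
          refine lintegral_congr fun x => ?_
          rw [ENNReal.ofReal_sum_of_nonneg fun i _ => sq_nonneg _]
      _ = ∫⁻ x, ENNReal.ofReal ((∑ i, u i x) ^ 2) := by
          refine lintegral_congr_ae (hae.mono fun x hx => ?_)
          dsimp only
          rw [hsq x hx]
      _ = 1 := hnorm
  -- Part 1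
  refine ⟨?_, part2, part3⟩
  set F : EuclideanSpace ℝ (Fin n) → EuclideanSpace ℝ (Fin n) → ℝ≥0∞ := fun x y =>
    ENNReal.ofReal (((∑ i, u i x) - (∑ i, u i y)) ^ 2 / ‖x - y‖ ^ ((n : ℝ) + 2 * σ)) with hF
  have hgag : ∀ i, gagliardo n σ (A i) (u i) = ∫⁻ x in B i, ∫⁻ y in B i, F x y := by
    intro i
    unfold gagliardo
    simp only [hAB i]
    refine setLIntegral_congr_fun (hBmeas i) (fun x hx => ?_)
    refine setLIntegral_congr_fun (hBmeas i) (fun y hy => ?_)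
    simp only [hF]
    rw [hu i x hx, hu i y hy]
  calc (∑ i, gagliardo n σ (A i) (u i))
      = ∑ i, ∫⁻ x in B i, ∫⁻ y in B i, F x y := Finset.sum_congr rfl fun i _ => hgag i
    _ ≤ ∑ i, ∫⁻ x in B i, ∫⁻ y in {x | 0 < ∑ i, u i x}, F x y := by
        refine Finset.sum_le_sum fun i _ => lintegral_mono fun x => ?_
        exact lintegral_mono' (Measure.restrict_mono (hBS i) le_rfl) le_rfl
    _ = ∫⁻ x in ⋃ i, B i, ∫⁻ y in {x | 0 < ∑ i, u i x}, F x y := by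
        rw [lintegral_iUnion hBmeas hBdisj, tsum_fintype]
    _ ≤ ∫⁻ x in {x | 0 < ∑ i, u i x}, ∫⁻ y in {x | 0 < ∑ i, u i x}, F x y := by
        refine lintegral_mono' (Measure.restrict_mono ?_ le_rfl) le_rfl
        exact Set.iUnion_subset fun i => hBS i
    _ = gagliardo n σ {x | 0 < ∑ i, u i x} (fun x => ∑ i, u i x) := rfl
end
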